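/- Let z > 0, x ∈ ℝ, y ≠ 0, T ∈ ℝ. With λ = μ = 1, Ã = [[1, −z/y], [−y, 1]], x̃ = x√z and ỹ = y/√z, one has e^{T} · (1, 1) · exp(−Ã T) · (1, xy)ᵀ = (1/2) [ (1 + ỹ)(1 + x̃) e^{√z · T} + (1 − ỹ)(1 − x̃) e^{−√z · T} ]. -/

import Mathlib

open Matrix

/-- The symmetric case `λ = μ = 1`: closed form of the per-atom generating function
in terms of `x̃ = x√z` and `ỹ = y/√z`. -/
theorem stmt_15 (z x y T : ℝ) (hz : 0 < z) (hy : y ≠ 0)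
    (A : Matrix (Fin 2) (Fin 2) ℝ) (hA : A = !![1, -(z / y); -y, 1])
    (xt yt : ℝ) (hxt : xt = x * Real.sqrt z) (hyt : yt = y / Real.sqrt z) :
    Real.exp T * (![1, 1] ⬝ᵥ (NormedSpace.exp (-(T • A))).mulVec ![1, x * y]) =
    (1 / 2) * ((1 + yt) * (1 + xt) * Real.exp (Real.sqrt z * T) +
      (1 - yt) * (1 - xt) * Real.exp (-(Real.sqrt z * T))) := by
  set s := Real.sqrt z with hs
  have hs0 : 0 < s := Real.sqrt_pos.mpr hz
  have hsne : s ≠ 0 := ne_of_gt hs0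
  have hs2 : s * s = z := Real.mul_self_sqrt hz.le
  set P : Matrix (Fin 2) (Fin 2) ℝ := !![1, 1; y / s, -(y / s)] with hP
  have hdet : P.det = -(2 * (y / s)) := by
    simp [hP, Matrix.det_fin_two_of]; ring
  have hdet0 : P.det ≠ 0 := by
    rw [hdet]
    have : y / s ≠ 0 := div_ne_zero hy hsne
    intro h
    apply this
    linarith [neg_eq_zero.mp h]
  have hunit : IsUnit P.det := isUnit_iff_ne_zero.mpr hdet0
  haveI := P.invertibleOfIsUnitDet hunit
  set D : Matrix (Fin 2) (Fin 2) ℝ := Matrix.diagonal ![s * T - T, -(s * T) - T] with hD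
  have hconj : -(T • A) = P * D * P⁻¹ := by
    rw [eq_comm, Matrix.mul_inv_eq_iff_eq_mul_of_invertible]
    ext i j
    fin_cases i <;> fin_cases j <;>
      simp only [hA, hP, hD, Matrix.mul_apply, Fin.sum_univ_two, Matrix.diagonal,
        Matrix.cons_val', Matrix.cons_val_zero, Matrix.cons_val_one, Matrix.head_cons,
        Matrix.head_fin_const, Matrix.empty_val', Matrix.cons_val_fin_one, Matrix.neg_apply,
        Matrix.smul_apply, Matrix.of_apply, smul_eq_mul, ← hs2,
        if_true, if_false, Fin.isValue, Fin.zero_eta, Fin.mk_one, one_ne_zero, zero_ne_one] <;>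
      field_simp <;> ring
  have hexp : NormedSpace.exp (-(T • A)) =
      P * Matrix.diagonal ![Real.exp (s * T - T), Real.exp (-(s * T) - T)] * P⁻¹ := by
    rw [hconj, Matrix.exp_conj P D ((Matrix.isUnit_iff_isUnit_det P).mpr hunit), hD, Matrix.exp_diagonal]
    have h2 : NormedSpace.exp ![s * T - T, -(s * T) - T] =
        ![Real.exp (s * T - T), Real.exp (-(s * T) - T)] := by
      funext i; fin_cases i <;> simp [Real.exp_eq_exp_ℝ]
    rw [h2]
  have hPinv : P⁻¹ = (P.det)⁻¹ • !![-(y / s), -1; -(y / s), 1] := by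
    rw [Matrix.inv_def, Matrix.adjugate_fin_two_of, Ring.inverse_eq_inv]
  rw [hexp, hPinv, hdet, hxt, hyt]
  simp only [Matrix.mulVec, dotProduct, Matrix.mul_apply, Fin.sum_univ_two,
    Matrix.diagonal, Matrix.cons_val', Matrix.cons_val_zero, Matrix.cons_val_one,
    Matrix.head_cons, Matrix.empty_val', Matrix.cons_val_fin_one, Matrix.smul_apply,
    Matrix.of_apply, smul_eq_mul, Fin.isValue, if_true, if_false, hP,
    Real.exp_sub, Real.exp_neg, one_ne_zero, zero_ne_one]
  have hE := Real.exp_ne_zero T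
  have hys : y / s ≠ 0 := div_ne_zero hy hsne
  field_simp
  ring
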